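/- arXiv:2102.10941 — 2 statements merged into one kernel-verified Lean document; each statement's English description precedes it below -/
import Mathlib

section
/- Let ℓ ∈ ℕ, ν ∈ ℂ, and let φ_ℓ(x) = c₁|x|^{2(ℓ+1)−d} + c₂|x|^{2(ℓ+1)−d}log|x| (c₁,c₂ ∈ ℝ) be a radial polyharmonic kernel, and define the Bernoulli symbol a_ν^{(ℓ)}(y,z) = |z|^{−ν} ( φ_ℓ(y−z) − Σ_{k=0}^{2ℓ+1} (1/k!) ⟨−z,∇⟩^k φ_ℓ(y) ). Then for every multi-index α ∈ ℕ^d and every compact set K ⊆ ℝ^d∖{0} there exist R > 0 and C > 0 (depending only on ℓ, ν, α, K) such that |D_z^α a_ν^{(ℓ)}(y,z)| ≤ C |z|^{2(ℓ+1) − Re ν − |α|} for all z with |z| > R and all y ∈ K. -/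
open MeasureTheory Filter Topology Metric Real
open scoped RealInnerProductSpace FourierTransform Pointwise Matrix ContDiff

noncomputable section

/-- Euclidean space `ℝ^d`. -/
abbrev Eu (d : ℕ) : Type := EuclideanSpace ℝ (Fin d)

variable {d : ℕ}

/-- The Laplacian of a complex-valued function on `ℝ^d`. -/
def lap (f : Eu d → ℂ) (x : Eu d) : ℂ :=
  ∑ i : Fin d, iteratedFDeriv ℝ 2 f x ![EuclideanSpace.single i 1, EuclideanSpace.single i 1]

/-- The Laplacian within a set (using derivatives within `s`). -/
def lapOn (s : Set (Eu d)) (f : Eu d → ℂ) (x : Eu d) : ℂ :=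
  ∑ i : Fin d, iteratedFDerivWithin ℝ 2 f s x ![EuclideanSpace.single i 1, EuclideanSpace.single i 1]

/-- The point `M n` of the lattice `M ℤ^d`. -/
def lpt (M : Matrix (Fin d) (Fin d) ℝ) (n : Fin d → ℤ) : Eu d :=
  (EuclideanSpace.equiv (Fin d) ℝ).symm (M.mulVec fun i => (n i : ℝ))

/-- The character `e^{-2πi⟨z,y⟩}`. -/
def eChar (z y : Eu d) : ℂ := Complex.exp ((-(2 * π * ⟪z, y⟫) : ℝ) * Complex.I)

/-- A mollifier: a nonnegative rotationally invariant test function supported in the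
open unit ball with unit integral. -/
def IsMollifier (χ : Eu d → ℝ) : Prop :=
  ContDiff ℝ ∞ χ ∧ tsupport χ ⊆ Metric.ball 0 1 ∧ (∀ x, 0 ≤ χ x) ∧
    (∀ x y : Eu d, ‖x‖ = ‖y‖ → χ x = χ y) ∧ (∫ x, χ x) = 1

/-- The rescaled mollifier `χ_β = β^{-d} χ(·/β)`. -/
def mollify (χ : Eu d → ℝ) (β : ℝ) (x : Eu d) : ℝ := (β ^ d)⁻¹ * χ (β⁻¹ • x)

/-- The smooth cutoff function `χ̂_β`, the Fourier transform of `χ_β`. -/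
def cutoff (χ : Eu d → ℝ) (β : ℝ) : Eu d → ℂ :=
  𝓕 (fun x => ((mollify χ β x : ℝ) : ℂ))

/-- First-order partial derivative in the `i`-th coordinate direction. -/
def pderiv1 (i : Fin d) (f : Eu d → ℂ) (x : Eu d) : ℂ := fderiv ℝ f x (EuclideanSpace.single i 1)

/-- The partial derivative `D^α` of multi-order `α`. -/
def mderiv (α : Fin d → ℕ) (f : Eu d → ℂ) : Eu d → ℂ :=
  ((List.ofFn fun i : Fin d => (pderiv1 i)^[α i]).foldr (· ∘ ·) id) f

/-- The total order `|α|` of a multi-index. -/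
def mdeg (α : Fin d → ℕ) : ℕ := ∑ i, α i

/-- Test functions on an open set `Ω`: smooth functions compactly supported inside `Ω`. -/
def IsTest (Ω : Set (Eu d)) (ψ : Eu d → ℂ) : Prop :=
  ContDiff ℝ ∞ ψ ∧ HasCompactSupport ψ ∧ tsupport ψ ⊆ Ω

/-- Convergence in `C^∞(Ω)`: all derivatives converge uniformly on compact subsets of `Ω`. -/
def ConvCinftyOn (Ω : Set (Eu d)) (f : ℕ → Eu d → ℂ) (v : Eu d → ℂ) : Prop :=
  ∀ K : Set (Eu d), IsCompact K → K ⊆ Ω → ∀ n : ℕ,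
    TendstoUniformlyOn (fun j x => iteratedFDerivWithin ℝ n (f j) Ω x)
      (fun x => iteratedFDerivWithin ℝ n v Ω x) atTop K

namespace S14

inductive Expr (d : ℕ) : Type where
  | const : ℂ → Expr d
  | inn : Eu d → Eu d → Expr d
  | epow : ℂ → Eu d → Expr d
  | elog : Eu d → Expr d
  | add : Expr d → Expr d → Expr d
  | mul : Expr d → Expr d → Expr d

namespace Expr

def eval : Expr d → Eu d → ℂ
  | const c, _ => c
  | inn u v, z => (⟪u, z - v⟫ : ℂ)
  | epow w v, z => Complex.exp ((Real.log ‖z - v‖ : ℂ) * w)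
  | elog v, z => ((Real.log ‖z - v‖ : ℝ) : ℂ)
  | add e₁ e₂, z => e₁.eval z + e₂.eval z
  | mul e₁ e₂, z => e₁.eval z * e₂.eval z

def ord : Expr d → ℝ
  | const _ => 0
  | inn _ _ => 1
  | epow w _ => w.re
  | elog _ => 1
  | add e₁ e₂ => max e₁.ord e₂.ord
  | mul e₁ e₂ => e₁.ord + e₂.ord

def rad : Expr d → ℝ
  | const _ => 2
  | inn _ v => 2*‖v‖ + 2
  | epow _ v => 2*‖v‖ + 2
  | elog v => 2*‖v‖ + 2
  | add e₁ e₂ => max e₁.rad e₂.rad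
  | mul e₁ e₂ => max e₁.rad e₂.rad

def cb : Expr d → ℝ
  | const c => ‖c‖
  | inn u _ => 2*‖u‖
  | epow w _ => 2 ^ |w.re|
  | elog _ => 2
  | add e₁ e₂ => e₁.cb + e₂.cb
  | mul e₁ e₂ => e₁.cb * e₂.cb

def pder (i : Fin d) : Expr d → Expr d
  | const _ => mul (const 0) (epow (-1) 0)
  | inn u _ => const ((⟪u, EuclideanSpace.single i 1⟫ : ℝ) : ℂ)
  | epow w v => mul (mul (const w) (mul (epow w v) (epow (-2) v)))
      (inn (EuclideanSpace.single i 1) v)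
  | elog v => mul (epow (-2) v) (inn (EuclideanSpace.single i 1) v)
  | add e₁ e₂ => add (e₁.pder i) (e₂.pder i)
  | mul e₁ e₂ => add (mul (e₁.pder i) e₂) (mul e₁ (e₂.pder i))

lemma cb_nonneg (e : Expr d) : 0 ≤ e.cb := by
  induction e with
  | const c => exact norm_nonneg c
  | inn u v => simp only [cb]; positivity
  | epow w v => simp only [cb]; positivity
  | elog v => simp only [cb]; norm_num
  | add e₁ e₂ h₁ h₂ => exact add_nonneg h₁ h₂
  | mul e₁ e₂ h₁ h₂ => exact mul_nonneg h₁ h₂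

lemma two_le_rad (e : Expr d) : 2 ≤ e.rad := by
  induction e with
  | const c => exact le_refl _
  | inn u v => simp only [rad]; nlinarith [norm_nonneg v]
  | epow w v => simp only [rad]; nlinarith [norm_nonneg v]
  | elog v => simp only [rad]; nlinarith [norm_nonneg v]
  | add e₁ e₂ h₁ h₂ => exact le_trans h₁ (le_max_left _ _)
  | mul e₁ e₂ h₁ h₂ => exact le_trans h₁ (le_max_left _ _)

lemma rad_pder (i : Fin d) (e : Expr d) : (e.pder i).rad ≤ e.rad := by
  induction e with
  | const c => simp only [pder, rad]; norm_num
  | inn u v => simp only [pder, rad]; nlinarith [norm_nonneg v]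
  | epow w v => simp only [pder, rad, max_le_iff]
                refine ⟨⟨by nlinarith [norm_nonneg v], le_refl _, le_refl _⟩, le_refl _⟩
  | elog v => simp only [pder, rad]; norm_num
  | add e₁ e₂ h₁ h₂ => simp only [pder, rad]; exact max_le_max h₁ h₂
  | mul e₁ e₂ h₁ h₂ =>
      simp only [pder, rad, max_le_iff]
      constructor
      · exact ⟨le_trans h₁ (le_max_left _ _), le_max_right _ _⟩
      · exact ⟨le_max_left _ _, le_trans h₂ (le_max_right _ _)⟩

lemma ord_pder (i : Fin d) (e : Expr d) : (e.pder i).ord ≤ e.ord - 1 := by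
  induction e with
  | const c => simp [pder, ord]
  | inn u v => simp [pder, ord]
  | epow w v => simp only [pder, ord, Complex.neg_re]; norm_num; linarith
  | elog v => simp only [pder, ord, Complex.neg_re]; norm_num
  | add e₁ e₂ h₁ h₂ =>
      simp only [pder, ord, max_le_iff]
      exact ⟨le_trans h₁ (by simp [ord, sub_le_sub_right, le_max_left]),
             le_trans h₂ (by simp [ord, sub_le_sub_right, le_max_right])⟩
  | mul e₁ e₂ h₁ h₂ =>
      simp only [pder, ord, max_le_iff]
      constructor <;> [linarith; linarith]

end Expr
end S14

namespace S14
namespace Expr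

lemma rpow_aux {r Z a : ℝ} (hZ : 2 < Z) (h1 : Z/2 ≤ r) (h2 : r ≤ 2*Z) :
    r ^ a ≤ 2 ^ |a| * Z ^ a := by
  have hZ0 : 0 < Z := by linarith
  have hr0 : 0 < r := by linarith
  rcases le_or_gt 0 a with ha | ha
  · calc r ^ a ≤ (2*Z) ^ a := Real.rpow_le_rpow hr0.le h2 ha
      _ = 2 ^ a * Z ^ a := Real.mul_rpow (by norm_num) hZ0.le
      _ ≤ 2 ^ |a| * Z ^ a :=
          mul_le_mul_of_nonneg_right
            (Real.rpow_le_rpow_of_exponent_le one_le_two (le_abs_self a))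
            (Real.rpow_nonneg hZ0.le a)
  · calc r ^ a ≤ (Z/2) ^ a := Real.rpow_le_rpow_of_nonpos (by linarith) h1 ha.le
      _ = Z ^ a / 2 ^ a := Real.div_rpow hZ0.le (by norm_num : (0:ℝ) ≤ 2) a
      _ = 2 ^ (-a) * Z ^ a := by
          rw [Real.rpow_neg (by norm_num)]
          ring
      _ = 2 ^ |a| * Z ^ a := by rw [abs_of_neg ha]

lemma atom_facts {v z : Eu d} (h : 2*‖v‖ + 2 < ‖z‖) :
    2 < ‖z‖ ∧ ‖z‖/2 ≤ ‖z - v‖ ∧ ‖z - v‖ ≤ 2*‖z‖ ∧ 1 < ‖z - v‖ := by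
  have hv := norm_nonneg v
  have h1 : ‖z‖ - ‖v‖ ≤ ‖z - v‖ := norm_sub_norm_le z v
  have h2 : ‖z - v‖ ≤ ‖z‖ + ‖v‖ := norm_sub_le z v
  refine ⟨by linarith, by linarith, by linarith, by linarith⟩

lemma norm_eval_epow {w : ℂ} {v z : Eu d} (h : (0:ℝ) < ‖z - v‖) :
    ‖(epow w v).eval z‖ = ‖z - v‖ ^ w.re := by
  rw [eval, Complex.norm_exp, Real.rpow_def_of_pos h]
  norm_num [Complex.mul_re]

lemma norm_eval_le (e : Expr d) : ∀ z : Eu d, e.rad < ‖z‖ → ‖e.eval z‖ ≤ e.cb * ‖z‖ ^ e.ord := by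
  induction e with
  | const c =>
      intro z _; simp [eval, cb, ord, Real.rpow_zero]
  | inn u v =>
      intro z hz
      obtain ⟨hZ, _, h2, _⟩ := atom_facts hz
      simp only [eval, cb, ord, Complex.norm_real, Real.rpow_one]
      calc |⟪u, z - v⟫| ≤ ‖u‖ * ‖z - v‖ := abs_real_inner_le_norm u (z - v)
        _ ≤ ‖u‖ * (2*‖z‖) := by
            exact mul_le_mul_of_nonneg_left h2 (norm_nonneg u)
        _ = 2*‖u‖ * ‖z‖ := by ring
  | epow w v =>
      intro z hz
      obtain ⟨hZ, h1, h2, hr1⟩ := atom_facts hz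
      rw [norm_eval_epow (by linarith)]
      exact rpow_aux hZ h1 h2
  | elog v =>
      intro z hz
      obtain ⟨hZ, h1, h2, hr1⟩ := atom_facts hz
      simp only [eval, cb, ord, Complex.norm_real, Real.rpow_one]
      rw [Real.norm_eq_abs, abs_of_nonneg (Real.log_nonneg hr1.le)]
      have := Real.log_le_sub_one_of_pos (by linarith : (0:ℝ) < ‖z - v‖)
      linarith
  | add e₁ e₂ h₁ h₂ =>
      intro z hz
      simp only [rad, max_lt_iff] at hz
      have hz1 : (1:ℝ) ≤ ‖z‖ := by have := two_le_rad e₁; linarith [hz.1]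
      calc ‖(e₁.add e₂).eval z‖ ≤ ‖e₁.eval z‖ + ‖e₂.eval z‖ := norm_add_le _ _
        _ ≤ e₁.cb * ‖z‖ ^ e₁.ord + e₂.cb * ‖z‖ ^ e₂.ord := by
            exact add_le_add (h₁ z hz.1) (h₂ z hz.2)
        _ ≤ e₁.cb * ‖z‖ ^ (e₁.add e₂).ord + e₂.cb * ‖z‖ ^ (e₁.add e₂).ord := by
            apply add_le_add
            · exact mul_le_mul_of_nonneg_left
                (Real.rpow_le_rpow_of_exponent_le hz1 (le_max_left _ _)) (cb_nonneg e₁)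
            · exact mul_le_mul_of_nonneg_left
                (Real.rpow_le_rpow_of_exponent_le hz1 (le_max_right _ _)) (cb_nonneg e₂)
        _ = (e₁.add e₂).cb * ‖z‖ ^ (e₁.add e₂).ord := by rw [cb]; ring
  | mul e₁ e₂ h₁ h₂ =>
      intro z hz
      simp only [rad, max_lt_iff] at hz
      have hz0 : (0:ℝ) < ‖z‖ := by have := two_le_rad e₁; linarith [hz.1]
      calc ‖(e₁.mul e₂).eval z‖ = ‖e₁.eval z‖ * ‖e₂.eval z‖ := norm_mul _ _
        _ ≤ (e₁.cb * ‖z‖ ^ e₁.ord) * (e₂.cb * ‖z‖ ^ e₂.ord) := by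
            exact mul_le_mul (h₁ z hz.1) (h₂ z hz.2) (norm_nonneg _)
              (mul_nonneg (cb_nonneg e₁) (Real.rpow_nonneg hz0.le _))
        _ = (e₁.mul e₂).cb * ‖z‖ ^ (e₁.mul e₂).ord := by
            rw [cb, ord, Real.rpow_add hz0]; ring

end Expr
end S14

namespace S14
namespace Expr

lemma log_norm_eq {v z : Eu d} : Real.log ‖z - v‖ = (1/2) * Real.log ⟪z - v, z - v⟫ := by
  rw [real_inner_self_eq_norm_sq, Real.log_pow]
  push_cast; ring

lemma eval_epow_neg_two {v z : Eu d} (h : (0:ℝ) < ‖z - v‖) :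
    Complex.exp ((Real.log ‖z - v‖ : ℂ) * (-2)) = (((⟪z - v, z - v⟫ : ℝ)⁻¹ : ℝ) : ℂ) := by
  have h2 : ((Real.log ‖z - v‖ : ℂ)) * (-2) = ((-2 * Real.log ‖z - v‖ : ℝ) : ℂ) := by
    push_cast; ring
  rw [h2, ← Complex.ofReal_exp]
  congr 1
  have : -2 * Real.log ‖z - v‖ = Real.log ((‖z - v‖ ^ 2)⁻¹) := by
    rw [Real.log_inv, Real.log_pow]; push_cast; ring
  rw [this, Real.exp_log (by positivity), real_inner_self_eq_norm_sq]

lemma hasFDeriv (e : Expr d) : ∀ z : Eu d, e.rad < ‖z‖ →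
    ∃ L : Eu d →L[ℝ] ℂ, HasFDerivAt e.eval L z ∧
      ∀ i : Fin d, L (EuclideanSpace.single i 1) = ((e.pder i).eval z) := by
  induction e with
  | const c =>
      intro z _
      exact ⟨0, hasFDerivAt_const c z, fun i => by simp [pder, eval]⟩
  | inn u v =>
      intro z _
      have h1 : HasFDerivAt (fun z : Eu d => z - v) (ContinuousLinearMap.id ℝ (Eu d)) z :=
        (hasFDerivAt_id z).sub_const v
      have h2 := ((innerSL ℝ u).hasFDerivAt (x := z - v)).comp z h1
      have h3 := (Complex.ofRealCLM.hasFDerivAt (x := ⟪u, z - v⟫)).comp z h2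
      refine ⟨_, h3, fun i => ?_⟩
      simp [pder, eval]
  | epow w v =>
      intro z hz
      obtain ⟨hZ, hh1, hh2, hr1⟩ := atom_facts hz
      have hx0 : (0:ℝ) < ‖z - v‖ := by linarith
      have hx : z - v ≠ 0 := by
        intro h; rw [h] at hx0; simp at hx0
      have hgz : ⟪z - v, z - v⟫ ≠ 0 := by
        rw [real_inner_self_eq_norm_sq]; positivity
      have hfun : (epow w v).eval =
          fun z : Eu d => Complex.exp (w * (((1/2) * Real.log ⟪z - v, z - v⟫ : ℝ) : ℂ)) := by
        funext z; rw [eval, log_norm_eq]; ring_nf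
      have h1 : HasFDerivAt (fun z : Eu d => z - v) (ContinuousLinearMap.id ℝ (Eu d)) z :=
        (hasFDerivAt_id z).sub_const v
      have hg : HasFDerivAt (fun z : Eu d => ⟪z - v, z - v⟫)
          ((fderivInnerCLM ℝ (z - v, z - v)).comp
            ((ContinuousLinearMap.id ℝ (Eu d)).prod (ContinuousLinearMap.id ℝ (Eu d)))) z :=
        h1.inner ℝ h1
      have hlog := (Real.hasDerivAt_log hgz).comp_hasFDerivAt z hg
      have hhalf := hlog.const_mul (1/2 : ℝ)
      have hre := (Complex.ofRealCLM.hasFDerivAt).comp z hhalf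
      have hmul := hre.const_mul w
      have hexp := hmul.cexp
      simp only [Function.comp_apply, Function.comp_def, Complex.ofRealCLM_apply] at hexp
      rw [← hfun] at hexp
      refine ⟨_, hexp, fun i => ?_⟩
      simp only [pder, eval, ContinuousLinearMap.coe_comp', Function.comp_apply,
        ContinuousLinearMap.smul_apply, ContinuousLinearMap.coe_smul', Pi.smul_apply,
        fderivInnerCLM_apply, ContinuousLinearMap.prod_apply, ContinuousLinearMap.coe_id',
        id_eq, Complex.ofRealCLM_apply, Complex.real_smul, smul_eq_mul]
      rw [eval_epow_neg_two hx0, log_norm_eq,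
        real_inner_comm (z - v) (EuclideanSpace.single i 1),
        mul_comm ((1/2 * Real.log ⟪z - v, z - v⟫ : ℝ) : ℂ) w]
      push_cast
      ring
  | elog v =>
      intro z hz
      obtain ⟨hZ, hh1, hh2, hr1⟩ := atom_facts hz
      have hx0 : (0:ℝ) < ‖z - v‖ := by linarith
      have hgz : ⟪z - v, z - v⟫ ≠ 0 := by
        rw [real_inner_self_eq_norm_sq]; positivity
      have hfun : (elog v).eval =
          fun z : Eu d => (((1/2) * Real.log ⟪z - v, z - v⟫ : ℝ) : ℂ) := by
        funext z; rw [eval, log_norm_eq]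
      have h1 : HasFDerivAt (fun z : Eu d => z - v) (ContinuousLinearMap.id ℝ (Eu d)) z :=
        (hasFDerivAt_id z).sub_const v
      have hg : HasFDerivAt (fun z : Eu d => ⟪z - v, z - v⟫)
          ((fderivInnerCLM ℝ (z - v, z - v)).comp
            ((ContinuousLinearMap.id ℝ (Eu d)).prod (ContinuousLinearMap.id ℝ (Eu d)))) z :=
        h1.inner ℝ h1
      have hlog := (Real.hasDerivAt_log hgz).comp_hasFDerivAt z hg
      have hhalf := hlog.const_mul (1/2 : ℝ)
      have hre := (Complex.ofRealCLM.hasFDerivAt).comp z hhalf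
      simp only [Function.comp_apply, Function.comp_def, Complex.ofRealCLM_apply] at hre
      rw [← hfun] at hre
      refine ⟨_, hre, fun i => ?_⟩
      simp only [pder, eval, ContinuousLinearMap.coe_comp', Function.comp_apply,
        ContinuousLinearMap.smul_apply, ContinuousLinearMap.coe_smul', Pi.smul_apply,
        fderivInnerCLM_apply, ContinuousLinearMap.prod_apply, ContinuousLinearMap.coe_id',
        id_eq, Complex.ofRealCLM_apply, Complex.real_smul, smul_eq_mul]
      rw [eval_epow_neg_two hx0, real_inner_comm (z - v) (EuclideanSpace.single i 1)]
      push_cast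
      ring
  | add e₁ e₂ h₁ h₂ =>
      intro z hz
      simp only [rad, max_lt_iff] at hz
      obtain ⟨L₁, hL₁, hLe₁⟩ := h₁ z hz.1
      obtain ⟨L₂, hL₂, hLe₂⟩ := h₂ z hz.2
      refine ⟨L₁ + L₂, hL₁.add hL₂, fun i => ?_⟩
      simp [pder, eval, hLe₁ i, hLe₂ i]
  | mul e₁ e₂ h₁ h₂ =>
      intro z hz
      simp only [rad, max_lt_iff] at hz
      obtain ⟨L₁, hL₁, hLe₁⟩ := h₁ z hz.1
      obtain ⟨L₂, hL₂, hLe₂⟩ := h₂ z hz.2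
      refine ⟨_, hL₁.mul hL₂, fun i => ?_⟩
      simp [pder, eval, hLe₁ i, hLe₂ i]
      ring
end Expr
end S14

namespace S14
namespace Expr

inductive Dom : Expr d → Expr d → Prop where
  | const {c c' : ℂ} : ‖c‖ ≤ ‖c'‖ → Dom (.const c) (.const c')
  | inn {u v v' : Eu d} : ‖v‖ ≤ ‖v'‖ → Dom (.inn u v) (.inn u v')
  | epow {w : ℂ} {v v' : Eu d} : ‖v‖ ≤ ‖v'‖ → Dom (.epow w v) (.epow w v')
  | elog {v v' : Eu d} : ‖v‖ ≤ ‖v'‖ → Dom (.elog v) (.elog v')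
  | add {e₁ e₂ e₁' e₂' : Expr d} : Dom e₁ e₁' → Dom e₂ e₂' → Dom (.add e₁ e₂) (.add e₁' e₂')
  | mul {e₁ e₂ e₁' e₂' : Expr d} : Dom e₁ e₁' → Dom e₂ e₂' → Dom (.mul e₁ e₂) (.mul e₁' e₂')

lemma Dom.refl (e : Expr d) : Dom e e := by
  induction e with
  | const c => exact Dom.const le_rfl
  | inn u v => exact Dom.inn le_rfl
  | epow w v => exact Dom.epow le_rfl
  | elog v => exact Dom.elog le_rfl
  | add e₁ e₂ h₁ h₂ => exact Dom.add h₁ h₂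
  | mul e₁ e₂ h₁ h₂ => exact Dom.mul h₁ h₂

lemma Dom.ord_eq {e e' : Expr d} (h : Dom e e') : e.ord = e'.ord := by
  induction h with
  | const _ => rfl
  | inn _ => rfl
  | epow _ => rfl
  | elog _ => rfl
  | add _ _ h₁ h₂ => simp [ord, h₁, h₂]
  | mul _ _ h₁ h₂ => simp [ord, h₁, h₂]

lemma Dom.rad_le {e e' : Expr d} (h : Dom e e') : e.rad ≤ e'.rad := by
  induction h with
  | const _ => exact le_rfl
  | inn h => simp only [rad]; linarith
  | epow h => simp only [rad]; linarith
  | elog h => simp only [rad]; linarith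
  | add _ _ h₁ h₂ => exact max_le_max h₁ h₂
  | mul _ _ h₁ h₂ => exact max_le_max h₁ h₂

lemma Dom.cb_le {e e' : Expr d} (h : Dom e e') : e.cb ≤ e'.cb := by
  induction h with
  | const h => exact h
  | inn _ => exact le_rfl
  | epow _ => exact le_rfl
  | elog _ => exact le_rfl
  | add _ _ h₁ h₂ => exact add_le_add h₁ h₂
  | @mul e₁ e₂ e₁' e₂' hd₁ hd₂ h₁ h₂ =>
      exact mul_le_mul h₁ h₂ (cb_nonneg e₂) (le_trans (cb_nonneg e₁) h₁)

lemma Dom.pder {e e' : Expr d} (i : Fin d) (h : Dom e e') : Dom (e.pder i) (e'.pder i) := by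
  induction h with
  | const _ => exact Dom.refl _
  | inn _ => exact Dom.refl _
  | @epow w v v' h =>
      exact Dom.mul (Dom.mul (Dom.refl _) (Dom.mul (Dom.epow h) (Dom.epow h))) (Dom.inn h)
  | elog h => exact Dom.mul (Dom.epow h) (Dom.inn h)
  | add _ _ h₁ h₂ => exact Dom.add h₁ h₂
  | mul hd₁ hd₂ h₁ h₂ => exact Dom.add (Dom.mul h₁ hd₂) (Dom.mul hd₁ h₂)

lemma rad_pder_iter (i : Fin d) (n : ℕ) (e : Expr d) : ((pder i)^[n] e).rad ≤ e.rad := by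
  induction n with
  | zero => exact le_rfl
  | succ n ih =>
      rw [Function.iterate_succ_apply']
      exact le_trans (rad_pder i _) ih

lemma ord_pder_iter (i : Fin d) (n : ℕ) (e : Expr d) : ((pder i)^[n] e).ord ≤ e.ord - n := by
  induction n with
  | zero => simp
  | succ n ih =>
      rw [Function.iterate_succ_apply']
      refine le_trans (ord_pder i _) ?_
      push_cast
      linarith

lemma dom_pder_iter (i : Fin d) (n : ℕ) {e e' : Expr d} (h : Dom e e') :
    Dom ((pder i)^[n] e) ((pder i)^[n] e') := by
  induction n with
  | zero => exact h
  | succ n ih =>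
      rw [Function.iterate_succ_apply', Function.iterate_succ_apply']
      exact ih.pder i

/-- expression-level multi-derivative along a list of directions -/
def lfold (α : Fin d → ℕ) (l : List (Fin d)) (e : Expr d) : Expr d :=
  (l.map fun i => (Expr.pder i)^[α i]).foldr (· ∘ ·) id e

lemma lfold_nil (α : Fin d → ℕ) (e : Expr d) : lfold α [] e = e := rfl

lemma lfold_cons (α : Fin d → ℕ) (i : Fin d) (l : List (Fin d)) (e : Expr d) :
    lfold α (i :: l) e = (pder i)^[α i] (lfold α l e) := rfl

lemma rad_lfold (α : Fin d → ℕ) (l : List (Fin d)) (e : Expr d) : (lfold α l e).rad ≤ e.rad := by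
  induction l with
  | nil => exact le_rfl
  | cons i l ih => exact le_trans (rad_pder_iter i (α i) _) ih

lemma ord_lfold (α : Fin d → ℕ) (l : List (Fin d)) (e : Expr d) :
    (lfold α l e).ord ≤ e.ord - ((l.map α).sum : ℕ) := by
  induction l with
  | nil => simp [lfold_nil]
  | cons i l ih =>
      rw [lfold_cons]
      refine le_trans (ord_pder_iter i (α i) _) ?_
      have hc : ((((i :: l).map α).sum : ℕ) : ℝ) = (α i : ℝ) + (((l.map α).sum : ℕ) : ℝ) := by
        simp
      rw [hc]
      linarith

lemma dom_lfold (α : Fin d → ℕ) (l : List (Fin d)) {e e' : Expr d} (h : Dom e e') :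
    Dom (lfold α l e) (lfold α l e') := by
  induction l with
  | nil => exact h
  | cons i l ih => exact dom_pder_iter i (α i) ih

end Expr

open Expr in
/-- agreement of a function with an expression outside radius `R` -/
def Agree (R : ℝ) (f : Eu d → ℂ) (e : Expr d) : Prop :=
  e.rad ≤ R ∧ ∀ z : Eu d, R < ‖z‖ → f z = e.eval z

open Expr in
lemma Agree.pd {R : ℝ} {f : Eu d → ℂ} {e : Expr d} (i : Fin d) (h : Agree R f e) :
    Agree R (pderiv1 i f) (e.pder i) := by
  refine ⟨le_trans (rad_pder i e) h.1, fun z hz => ?_⟩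
  have hopen : IsOpen {w : Eu d | R < ‖w‖} := isOpen_lt continuous_const continuous_norm
  have hev : f =ᶠ[nhds z] e.eval :=
    Filter.eventuallyEq_of_mem (hopen.mem_nhds hz) (fun w hw => h.2 w hw)
  obtain ⟨L, hL, hLi⟩ := hasFDeriv e z (lt_of_le_of_lt h.1 hz)
  show fderiv ℝ f z (EuclideanSpace.single i 1) = _
  rw [hev.fderiv_eq, hL.fderiv, hLi i]

open Expr in
lemma Agree.iter {R : ℝ} {f : Eu d → ℂ} {e : Expr d} (i : Fin d) (n : ℕ) (h : Agree R f e) :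
    Agree R ((pderiv1 i)^[n] f) ((pder i)^[n] e) := by
  induction n with
  | zero => exact h
  | succ n ih =>
      rw [Function.iterate_succ_apply', Function.iterate_succ_apply']
      exact ih.pd i

open Expr in
lemma Agree.lfold {R : ℝ} {α : Fin d → ℕ} (l : List (Fin d)) {f : Eu d → ℂ} {e : Expr d}
    (h : Agree R f e) :
    Agree R (((l.map fun i => (pderiv1 i)^[α i]).foldr (· ∘ ·) id) f) (Expr.lfold α l e) := by
  induction l with
  | nil => exact h
  | cons i l ih => exact ih.iter i (α i)

open Expr in
lemma Agree.mder {R : ℝ} {α : Fin d → ℕ} {f : Eu d → ℂ} {e : Expr d} (h : Agree R f e) :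
    Agree R (mderiv α f) (Expr.lfold α (List.finRange d) e) := by
  have h2 := Agree.lfold (α := α) (List.finRange d) h
  have h3 : mderiv α f = ((List.finRange d).map fun i => (pderiv1 i)^[α i]).foldr (· ∘ ·) id f := by
    rw [mderiv, List.ofFn_eq_map]
  rwa [h3]

lemma sum_map_finRange (α : Fin d → ℕ) : ((List.finRange d).map α).sum = mdeg α := by
  rw [← List.ofFn_eq_map, List.sum_ofFn, mdeg]

end S14

namespace S14
namespace Expr

def sumList : List (Expr d) → Expr d
  | [] => const 0
  | e :: l => add e (sumList l)

def prodList : List (Expr d) → Expr d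
  | [] => const 1
  | e :: l => mul e (prodList l)

lemma eval_sumList (l : List (Expr d)) (z : Eu d) :
    (sumList l).eval z = (l.map (fun e => e.eval z)).sum := by
  induction l with
  | nil => simp [sumList, eval]
  | cons e l ih => simp [sumList, eval, ih]

lemma eval_prodList (l : List (Expr d)) (z : Eu d) :
    (prodList l).eval z = (l.map (fun e => e.eval z)).prod := by
  induction l with
  | nil => simp [prodList, eval]
  | cons e l ih => simp [prodList, eval, ih]

lemma rad_sumList_le {R : ℝ} (h2 : 2 ≤ R) {l : List (Expr d)} (h : ∀ e ∈ l, rad e ≤ R) :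
    (sumList l).rad ≤ R := by
  induction l with
  | nil => exact h2
  | cons e l ih =>
      simp only [sumList, rad, max_le_iff]
      exact ⟨h e (by simp), ih fun e' he' => h e' (by simp [he'])⟩

lemma rad_prodList_le {R : ℝ} (h2 : 2 ≤ R) {l : List (Expr d)} (h : ∀ e ∈ l, rad e ≤ R) :
    (prodList l).rad ≤ R := by
  induction l with
  | nil => exact h2
  | cons e l ih =>
      simp only [prodList, rad, max_le_iff]
      exact ⟨h e (by simp), ih fun e' he' => h e' (by simp [he'])⟩

lemma ord_sumList_le {t : ℝ} (ht : 0 ≤ t) {l : List (Expr d)} (h : ∀ e ∈ l, ord e ≤ t) :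
    (sumList l).ord ≤ t := by
  induction l with
  | nil => exact ht
  | cons e l ih =>
      simp only [sumList, ord, max_le_iff]
      exact ⟨h e (by simp), ih fun e' he' => h e' (by simp [he'])⟩

lemma ord_prodList (l : List (Expr d)) : (prodList l).ord = (l.map ord).sum := by
  induction l with
  | nil => simp [prodList, ord]
  | cons e l ih => simp [prodList, ord, ih]

lemma dom_sumList_map {β : Type*} (l : List β) (F G : β → Expr d)
    (h : ∀ x ∈ l, Dom (F x) (G x)) : Dom (sumList (l.map F)) (sumList (l.map G)) := by
  induction l with
  | nil => exact Dom.refl _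
  | cons x l ih =>
      simp only [List.map_cons, sumList]
      exact Dom.add (h x (by simp)) (ih fun x' hx' => h x' (by simp [hx']))

/-- the monomial `∏ j, z (m j)` -/
def mon (k : ℕ) (m : Fin k → Fin d) : Expr d :=
  prodList (List.ofFn fun j : Fin k => inn (EuclideanSpace.single (m j) 1) 0)

lemma ord_mon (k : ℕ) (m : Fin k → Fin d) : (mon k m).ord = (k : ℝ) := by
  rw [mon, ord_prodList, List.map_ofFn, List.sum_ofFn]
  simp [ord, Function.comp]

lemma rad_mon (k : ℕ) (m : Fin k → Fin d) : (mon k m).rad ≤ 2 := by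
  refine rad_prodList_le le_rfl ?_
  intro e he
  rw [List.mem_ofFn] at he
  obtain ⟨j, rfl⟩ := he
  simp [rad]

lemma eval_mon (k : ℕ) (m : Fin k → Fin d) (z : Eu d) :
    (mon k m).eval z = ∏ j : Fin k, ((z (m j) : ℝ) : ℂ) := by
  rw [mon, eval_prodList, List.map_ofFn, List.prod_ofFn]
  congr 1
  funext j
  simp only [Function.comp_apply, eval, sub_zero]
  norm_cast
  rw [real_inner_comm]
  simp [EuclideanSpace.inner_single_right]

/-- Taylor-polynomial-like part -/
def poly (cf : (k : ℕ) → (Fin k → Fin d) → ℂ) (n : ℕ) : Expr d :=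
  sumList ((List.range n).map fun k =>
    sumList (((Finset.univ : Finset (Fin k → Fin d)).toList).map fun m =>
      mul (const (cf k m)) (mon k m)))

/-- the kernel part -/
def phiE (c₁ c₂ p : ℝ) (v : Eu d) : Expr d :=
  add (mul (const c₁) (epow (p : ℂ) v)) (mul (const c₂) (mul (epow (p : ℂ) v) (elog v)))

/-- full expression for the Bernoulli symbol -/
def fullE (ν : ℂ) (c₁ c₂ p : ℝ) (v : Eu d) (cf : (k : ℕ) → (Fin k → Fin d) → ℂ) (n : ℕ) :
    Expr d :=
  mul (epow (-ν) 0) (add (phiE c₁ c₂ p v) (mul (const (-1)) (poly cf n)))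

lemma rad_fullE (ν : ℂ) (c₁ c₂ p : ℝ) (v : Eu d) (cf : (k : ℕ) → (Fin k → Fin d) → ℂ) (n : ℕ) :
    (fullE ν c₁ c₂ p v cf n).rad ≤ 2*‖v‖ + 2 := by
  have h2 : (2:ℝ) ≤ 2*‖v‖ + 2 := by nlinarith [norm_nonneg v]
  have hpoly : (poly cf n).rad ≤ 2*‖v‖+2 := by
    refine rad_sumList_le h2 ?_
    intro e he
    rw [List.mem_map] at he
    obtain ⟨k, _, rfl⟩ := he
    refine rad_sumList_le h2 ?_
    intro e he
    rw [List.mem_map] at he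
    obtain ⟨m, _, rfl⟩ := he
    simp only [rad, max_le_iff]
    exact ⟨h2, le_trans (rad_mon k m) h2⟩
  simp only [fullE, phiE, rad, max_le_iff, norm_zero]
  and_intros <;> linarith [norm_nonneg v]

lemma ord_fullE_le (ν : ℂ) (c₁ c₂ p : ℝ) (v : Eu d) (cf : (k : ℕ) → (Fin k → Fin d) → ℂ)
    (n : ℕ) {t : ℝ} (ht : 0 ≤ t) (hp : p + 1 ≤ t) (hn : ∀ k < n, (k:ℝ) ≤ t) :
    (fullE ν c₁ c₂ p v cf n).ord ≤ (-ν).re + t := by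
  have hpoly : (poly cf n).ord ≤ t := by
    refine ord_sumList_le ht ?_
    intro e he
    rw [List.mem_map] at he
    obtain ⟨k, hk, rfl⟩ := he
    refine ord_sumList_le ht ?_
    intro e he
    rw [List.mem_map] at he
    obtain ⟨m, _, rfl⟩ := he
    simp only [ord, ord_mon]
    have := hn k (List.mem_range.mp hk)
    linarith [this]
  simp only [fullE, phiE, ord, Complex.ofReal_re]
  have h1 : (0:ℝ) + p ≤ t := by linarith
  have h2 : (0:ℝ) + (p + 1) ≤ t := by linarith
  have : max (max ((0:ℝ) + p) (0 + (p+1))) (0 + (poly cf n).ord) ≤ t :=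
    max_le (max_le h1 h2) (by linarith)
  linarith [this]

end Expr
end S14

namespace S14
namespace Expr

lemma dom_fullE {ν : ℂ} {c₁ c₂ p : ℝ} {v v' : Eu d}
    {cf cf' : (k : ℕ) → (Fin k → Fin d) → ℂ} {n : ℕ}
    (hv : ‖v‖ ≤ ‖v'‖) (hcf : ∀ k m, ‖cf k m‖ ≤ ‖cf' k m‖) :
    Dom (fullE ν c₁ c₂ p v cf n) (fullE ν c₁ c₂ p v' cf' n) := by
  refine Dom.mul (Dom.epow le_rfl)
    (Dom.add
      (Dom.add (Dom.mul (Dom.refl _) (Dom.epow hv))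
        (Dom.mul (Dom.refl _) (Dom.mul (Dom.epow hv) (Dom.elog hv))))
      (Dom.mul (Dom.refl _) ?_))
  apply dom_sumList_map
  intro k _
  apply dom_sumList_map
  intro m _
  exact Dom.mul (Dom.const (hcf k m)) (Dom.refl _)

lemma list_range_sum (g : ℕ → ℂ) (n : ℕ) :
    ((List.range n).map g).sum = ∑ k ∈ Finset.range n, g k := by
  induction n with
  | zero => simp
  | succ n ih =>
      rw [List.range_succ, List.map_append, List.sum_append, ih, Finset.sum_range_succ]
      simp

lemma cexp_log_mul (r : ℝ) (hr : 0 < r) (w : ℂ) :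
    Complex.exp ((Real.log r : ℂ) * w) = (r:ℂ) ^ w := by
  rw [Complex.cpow_def_of_ne_zero (by exact_mod_cast hr.ne'), Complex.ofReal_log hr.le]

lemma ofReal_rpow_eq (r p : ℝ) (hr : 0 < r) :
    ((r ^ p : ℝ) : ℂ) = Complex.exp ((Real.log r : ℂ) * (p:ℂ)) := by
  rw [Real.rpow_def_of_pos hr, Complex.ofReal_exp, Complex.ofReal_mul]

lemma eval_fullE_eq {ν : ℂ} {c₁ c₂ p : ℝ} {y z : Eu d}
    (hz0 : (0:ℝ) < ‖z‖) (hzy : (0:ℝ) < ‖z - y‖)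
    (T : (k : ℕ) → ContinuousMultilinearMap ℝ (fun _ : Fin k => Eu d) ℂ) (n : ℕ) :
    (fullE ν c₁ c₂ p y (fun k m => (k.factorial : ℂ)⁻¹ *
        ((-1:ℂ)^k * T k (fun j => EuclideanSpace.single (m j) 1))) n).eval z
      = (‖z‖ : ℂ) ^ (-ν) *
        (((c₁ * ‖y - z‖ ^ p + c₂ * ‖y - z‖ ^ p * Real.log ‖y - z‖ : ℝ) : ℂ)
          - ∑ k ∈ Finset.range n, ((k.factorial : ℂ))⁻¹ • T k (fun _ => -z)) := by
  have hyz : ‖y - z‖ = ‖z - y‖ := norm_sub_rev y z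
  -- the cpow factor
  have h1 : (epow (-ν) (0 : Eu d)).eval z = (‖z‖ : ℂ) ^ (-ν) := by
    rw [eval, sub_zero, cexp_log_mul ‖z‖ hz0]
  -- the kernel factor
  have h2 : (phiE c₁ c₂ p y).eval z
      = ((c₁ * ‖y - z‖ ^ p + c₂ * ‖y - z‖ ^ p * Real.log ‖y - z‖ : ℝ) : ℂ) := by
    simp only [phiE, eval]
    rw [hyz]
    push_cast
    rw [ofReal_rpow_eq ‖z - y‖ p hzy]
    ring
  -- the polynomial factor
  have h3 : (poly (fun k m => (k.factorial : ℂ)⁻¹ *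
        ((-1:ℂ)^k * T k (fun j => EuclideanSpace.single (m j) 1))) n).eval z
      = ∑ k ∈ Finset.range n, ((k.factorial : ℂ))⁻¹ • T k (fun _ => -z) := by
    rw [poly, eval_sumList, List.map_map, list_range_sum]
    refine Finset.sum_congr rfl ?_
    intro k _
    simp only [Function.comp_apply]
    rw [eval_sumList, List.map_map, Finset.sum_map_toList]
    -- expand T k by multilinearity
    have hdecomp : (fun _ : Fin k => -z)
        = fun _ : Fin k => ∑ j : Fin d, ((-z) j) • EuclideanSpace.single j 1 := by
      have h0 := (EuclideanSpace.basisFun (Fin d) ℝ).sum_repr (-z)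
      simp only [EuclideanSpace.basisFun_apply, EuclideanSpace.basisFun_repr] at h0
      funext i
      exact h0.symm
    have hms : T k (fun _ : Fin k => ∑ j : Fin d, ((-z) j) • EuclideanSpace.single j 1)
        = ∑ r : Fin k → Fin d, T k (fun i => ((-z) (r i)) • EuclideanSpace.single (r i) 1) :=
      (T k).toMultilinearMap.map_sum _
    rw [hdecomp, hms, Finset.smul_sum]
    refine Finset.sum_congr rfl ?_
    intro r _
    have hsm : T k (fun i => ((-z) (r i)) • EuclideanSpace.single (r i) 1)
        = (∏ i : Fin k, ((-z) (r i))) • T k (fun i => EuclideanSpace.single (r i) 1) :=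
      (T k).toMultilinearMap.map_smul_univ _ _
    rw [hsm]
    simp only [Function.comp_apply, eval, eval_mon, Complex.real_smul, smul_eq_mul]
    rw [Complex.ofReal_prod]
    have hneg : ∏ i : Fin k, (((-z) (r i) : ℝ) : ℂ)
        = (-1:ℂ)^k * ∏ i : Fin k, ((z (r i) : ℝ) : ℂ) := by
      have h0 : ∀ i : Fin k, (((-z) (r i) : ℝ) : ℂ) = (-1) * ((z (r i) : ℝ) : ℂ) := by
        intro i
        have : (-z) (r i) = -(z (r i)) := rfl
        rw [this]
        push_cast
        ring
      rw [Finset.prod_congr rfl fun i _ => h0 i,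
        Finset.prod_mul_distrib, Finset.prod_const, Finset.card_univ, Fintype.card_fin]
    rw [hneg]
    ring
  have hsplit : (fullE ν c₁ c₂ p y (fun k m => (k.factorial : ℂ)⁻¹ *
        ((-1:ℂ)^k * T k (fun j => EuclideanSpace.single (m j) 1))) n).eval z
      = (epow (-ν) (0 : Eu d)).eval z * ((phiE c₁ c₂ p y).eval z
          + (-1 : ℂ) * (poly (fun k m => (k.factorial : ℂ)⁻¹ *
              ((-1:ℂ)^k * T k (fun j => EuclideanSpace.single (m j) 1))) n).eval z) := rfl
  rw [hsplit, h1, h2, h3]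
  ring

end Expr
end S14


open S14 S14.Expr

/-- Decay estimates for the `z`-derivatives of the Bernoulli symbol
`a_ν^{(ℓ)}(y,z)`, uniformly for `y` in a compact set away from the origin. -/
theorem statement14 {d : ℕ} (ℓ : ℕ) (ν : ℂ) (c₁ c₂ : ℝ) (φ : Eu d → ℝ)
    (hφ : φ = fun x => c₁ * ‖x‖ ^ ((2*(ℓ+1) : ℝ) - d)
      + c₂ * ‖x‖ ^ ((2*(ℓ+1) : ℝ) - d) * Real.log ‖x‖)
    (a : Eu d → Eu d → ℂ)
    (ha : a = fun y z => (‖z‖ : ℂ) ^ (-ν) *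
      (((φ (y - z) : ℝ) : ℂ) - ∑ k ∈ Finset.range (2*ℓ+2),
        ((k.factorial : ℂ))⁻¹
          • iteratedFDeriv ℝ k (fun w => ((φ w : ℝ) : ℂ)) y (fun _ => -z)))
    (α : Fin d → ℕ) (K : Set (Eu d)) (hK : IsCompact K) (hK0 : K ⊆ {x : Eu d | x ≠ 0}) :
    ∃ R C : ℝ, 0 < R ∧ 0 < C ∧ ∀ y ∈ K, ∀ z : Eu d, R < ‖z‖ →
      ‖mderiv α (a y) z‖ ≤ C * ‖z‖ ^ ((2*(ℓ+1) : ℝ) - ν.re - (mdeg α : ℝ)) := by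
  
  by_cases hd : d = 0
  · subst hd
    refine ⟨1, 1, one_pos, one_pos, fun y hy => absurd ?_ (hK0 hy)⟩
    ext i
    exact absurd i.isLt (by omega)
  have hd1 : 0 < d := Nat.pos_of_ne_zero hd
  set p : ℝ := (2*(ℓ+1) : ℝ) - d with hp
  set φC : Eu d → ℂ := fun w => ((φ w : ℝ) : ℂ) with hφC
  set n : ℕ := 2*ℓ+2 with hn
  -- bound on K
  obtain ⟨B₀, hB₀⟩ := hK.exists_bound_of_continuousOn continuous_id.continuousOn
  set B : ℝ := max B₀ 0 with hB
  have hBy : ∀ y ∈ K, ‖y‖ ≤ B := fun y hy => le_trans (hB₀ y hy) (le_max_left _ _)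
  have hB0 : 0 ≤ B := le_max_right _ _
  -- smoothness of φC away from 0
  have hΩ : IsOpen {x : Eu d | x ≠ 0} := isOpen_ne
  have hφsm : ContDiffOn ℝ (⊤ : ℕ∞) φC {x : Eu d | x ≠ 0} := by
    intro x hx
    apply ContDiffAt.contDiffWithinAt
    have hx0 : x ≠ 0 := hx
    have hnrm : ContDiffAt ℝ (⊤:ℕ∞) (fun w : Eu d => ‖w‖) x := contDiffAt_id.norm ℝ hx0
    have hrp : ContDiffAt ℝ (⊤:ℕ∞) (fun w : Eu d => ‖w‖ ^ p) x :=
      hnrm.rpow_const_of_ne (norm_ne_zero_iff.mpr hx0)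
    have hlg : ContDiffAt ℝ (⊤:ℕ∞) (fun w : Eu d => Real.log ‖w‖) x :=
      hnrm.log (norm_ne_zero_iff.mpr hx0)
    have hre : ContDiffAt ℝ (⊤:ℕ∞) φ x := by
      rw [hφ]
      exact (contDiffAt_const.mul hrp).add ((contDiffAt_const.mul hrp).mul hlg)
    exact (Complex.ofRealCLM.contDiff.contDiffAt).comp x hre
  have hsm : ∀ k : ℕ, ContinuousOn (iteratedFDeriv ℝ k φC) {x : Eu d | x ≠ 0} := by
    intro k
    have h1 := hφsm.continuousOn_iteratedFDerivWithin (m := k) (by exact_mod_cast (le_top : (k:ℕ∞) ≤ ⊤)) hΩ.uniqueDiffOn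
    exact h1.congr ((iteratedFDerivWithin_of_isOpen k hΩ).symm)
  -- uniform bounds for the iterated derivatives on K
  have hbd : ∀ k : ℕ, ∃ C : ℝ, 0 ≤ C ∧ ∀ y ∈ K, ‖iteratedFDeriv ℝ k φC y‖ ≤ C := by
    intro k
    obtain ⟨C, hC⟩ := hK.exists_bound_of_continuousOn ((hsm k).mono hK0)
    exact ⟨max C 0, le_max_right _ _, fun y hy => le_trans (hC y hy) (le_max_left _ _)⟩
  choose M hM0 hM using hbd
  -- coefficients
  set cf : Eu d → (k : ℕ) → (Fin k → Fin d) → ℂ := fun y k m => (k.factorial : ℂ)⁻¹ *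
      ((-1:ℂ)^k * iteratedFDeriv ℝ k φC y (fun j => EuclideanSpace.single (m j) 1)) with hcfdef
  set cfS : (k : ℕ) → (Fin k → Fin d) → ℂ :=
      fun k _ => ((((k.factorial : ℝ))⁻¹ * M k : ℝ) : ℂ) with hcfSdef
  have hcf : ∀ y ∈ K, ∀ (k : ℕ) (m : Fin k → Fin d), ‖cf y k m‖ ≤ ‖cfS k m‖ := by
    intro y hy k m
    have h1 : ‖cf y k m‖ = ((k.factorial : ℝ))⁻¹ *
        ‖iteratedFDeriv ℝ k φC y (fun j => EuclideanSpace.single (m j) 1)‖ := by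
      simp [hcfdef, norm_mul]
    have h2 : ‖iteratedFDeriv ℝ k φC y (fun j => EuclideanSpace.single (m j) 1)‖
        ≤ M k := by
      refine le_trans ((iteratedFDeriv ℝ k φC y).le_opNorm _) ?_
      have he : ∀ j : Fin k, ‖EuclideanSpace.single (m j) (1:ℝ)‖ = 1 := by
        intro j; rw [EuclideanSpace.norm_single]; norm_num
      calc ‖iteratedFDeriv ℝ k φC y‖ * ∏ j : Fin k, ‖EuclideanSpace.single (m j) (1:ℝ)‖
          = ‖iteratedFDeriv ℝ k φC y‖ := by
            rw [Finset.prod_congr rfl fun j _ => he j]; simp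
        _ ≤ M k := hM k y hy
    have h3 : ‖cfS k m‖ = ((k.factorial : ℝ))⁻¹ * M k := by
      rw [hcfSdef]
      simp only [Complex.norm_real, Real.norm_eq_abs]
      rw [abs_of_nonneg]
      have : (0:ℝ) ≤ ((k.factorial : ℝ))⁻¹ := by positivity
      exact mul_nonneg this (hM0 k)
    rw [h1, h3]
    have : (0:ℝ) ≤ ((k.factorial : ℝ))⁻¹ := by positivity
    exact mul_le_mul_of_nonneg_left h2 this
  -- star data
  set i₀ : Fin d := ⟨0, hd1⟩ with hi₀
  set vS : Eu d := B • EuclideanSpace.single i₀ 1 with hvSdef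
  have hvS : ‖vS‖ = B := by
    rw [hvSdef, norm_smul, EuclideanSpace.norm_single]
    simp [abs_of_nonneg hB0]
  set Ey : Eu d → Expr d := fun y => Expr.fullE ν c₁ c₂ p y (cf y) n with hEy
  set ES : Expr d := Expr.fullE ν c₁ c₂ p vS cfS n with hES
  set R : ℝ := 2*B + 2 with hR
  set DS : Expr d := Expr.lfold α (List.finRange d) ES with hDS
  refine ⟨R, DS.cb + 1, by rw [hR]; linarith, by linarith [cb_nonneg DS], ?_⟩
  intro y hy z hz
  -- agreement between a y and Ey y beyond radius R
  have hAy : Agree R (a y) (Ey y) := by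
    constructor
    · refine le_trans (rad_fullE ν c₁ c₂ p y (cf y) n) ?_
      have := hBy y hy
      rw [hR]; linarith
    · intro z hz'
      have hz2 : (2:ℝ) < ‖z‖ := by rw [hR] at hz'; linarith
      have hz0 : (0:ℝ) < ‖z‖ := by linarith
      have hzy : (0:ℝ) < ‖z - y‖ := by
        have h1 : ‖z‖ - ‖y‖ ≤ ‖z - y‖ := norm_sub_norm_le z y
        have := hBy y hy
        rw [hR] at hz'
        linarith
      rw [ha]
      rw [Expr.eval_fullE_eq hz0 hzy (fun k => iteratedFDeriv ℝ k φC y) n]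
      rw [hφ]
  have hA := hAy.mder (α := α)
  obtain ⟨hrad, heval⟩ := hA
  rw [heval z hz]
  have hzR : (Expr.lfold α (List.finRange d) (Ey y)).rad < ‖z‖ := lt_of_le_of_lt hrad hz
  refine le_trans (Expr.norm_eval_le _ z hzR) ?_
  -- domination
  have hdom : Expr.Dom (Ey y) ES := by
    refine Expr.dom_fullE ?_ (hcf y hy)
    rw [hvS]; exact hBy y hy
  have hdom2 := Expr.dom_lfold α (List.finRange d) hdom
  have hcb : (Expr.lfold α (List.finRange d) (Ey y)).cb ≤ DS.cb := hdom2.cb_le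
  -- order estimate
  have hord : (Expr.lfold α (List.finRange d) (Ey y)).ord
      ≤ (2*(ℓ+1) : ℝ) - ν.re - (mdeg α : ℝ) := by
    refine le_trans (Expr.ord_lfold α (List.finRange d) (Ey y)) ?_
    rw [S14.sum_map_finRange]
    have hdr : (1:ℝ) ≤ (d:ℝ) := by exact_mod_cast hd1
    have h1 : (Ey y).ord ≤ (-ν).re + (2*(ℓ:ℝ)+2) := by
      refine Expr.ord_fullE_le ν c₁ c₂ p y (cf y) n (by positivity) ?_ ?_
      · rw [hp]; push_cast; linarith
      · intro k hk
        rw [hn] at hk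
        have : (k:ℝ) ≤ 2*(ℓ:ℝ)+1 := by exact_mod_cast Nat.lt_succ_iff.mp hk
        linarith
    rw [Complex.neg_re] at h1
    push_cast
    push_cast at h1
    linarith
  -- final chain
  have h1z : (1:ℝ) ≤ ‖z‖ := by rw [hR] at hz; linarith
  have h0z : (0:ℝ) < ‖z‖ := by linarith
  calc (Expr.lfold α (List.finRange d) (Ey y)).cb
        * ‖z‖ ^ (Expr.lfold α (List.finRange d) (Ey y)).ord
      ≤ DS.cb * ‖z‖ ^ (Expr.lfold α (List.finRange d) (Ey y)).ord := by
        exact mul_le_mul_of_nonneg_right hcb (Real.rpow_nonneg h0z.le _)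
    _ ≤ DS.cb * ‖z‖ ^ ((2*(ℓ+1) : ℝ) - ν.re - (mdeg α : ℝ)) := by
        exact mul_le_mul_of_nonneg_left
          (Real.rpow_le_rpow_of_exponent_le h1z hord) (cb_nonneg DS)
    _ ≤ (DS.cb + 1) * ‖z‖ ^ ((2*(ℓ+1) : ℝ) - ν.re - (mdeg α : ℝ)) := by
        have := Real.rpow_nonneg h0z.le ((2*(ℓ+1) : ℝ) - ν.re - (mdeg α : ℝ))
        nlinarith
end
end

section
/- For every integer m ≥ 1 and every ν ∈ ℂ with Re ν > 2, the two-dimensional lattice sums satisfy the solid-harmonic/Chebyshev identity Σ'_{z∈ℤ²} A_{2m}(z)/|z|^{ν+2m} = Σ_{k=0}^{m} ( T_{2m}^{(2k)}(0) / (2k)! ) · Σ'_{z∈ℤ²} z₁^{2k}/|z|^{ν+2k}, where A_{2m}(z) = Re((z₁ + i z₂)^{2m}) is the solid harmonic of degree 2m, T_{2m} is the Chebyshev polynomial of the first kind of degree 2m, T_{2m}^{(2k)}(0) its 2k-th derivative at 0, and all series converge absolutely. -/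
open MeasureTheory Filter Topology Metric Real
open scoped RealInnerProductSpace FourierTransform Pointwise Matrix ContDiff

noncomputable section

variable {d : ℕ}

section Statement19Aux

open Polynomial Polynomial.Chebyshev Finset

private lemma chebAux19 :
    ∀ n : ℕ, (T ℝ n).natDegree ≤ n ∧ ∀ k : ℕ, k % 2 ≠ n % 2 → (T ℝ n).coeff k = 0 := by
  intro n
  induction n using Nat.strong_induction_on with
  | _ n ih =>
    match n with
    | 0 =>
      refine ⟨by simp [T_zero], fun k hk => ?_⟩
      rw [show ((0:ℕ):ℤ) = 0 from rfl, T_zero, coeff_one, if_neg (by omega)]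
    | 1 =>
      refine ⟨by simp [T_one], fun k hk => ?_⟩
      rw [show ((1:ℕ):ℤ) = 1 from rfl, T_one, coeff_X, if_neg (by omega)]
    | (j+2) =>
      obtain ⟨d1, p1⟩ := ih (j+1) (by omega)
      obtain ⟨d0, p0⟩ := ih j (by omega)
      have hc1 : ((j+1:ℕ):ℤ) = (j:ℤ)+1 := by push_cast; ring
      have hc2 : ((j+2:ℕ):ℤ) = (j:ℤ)+2 := by push_cast; ring
      rw [hc1] at d1 p1
      rw [hc2, T_add_two]
      have h2 : (2 * X * T ℝ ((j:ℤ)+1)) = Polynomial.C 2 * (X * T ℝ ((j:ℤ)+1)) := by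
        rw [← mul_assoc, ← map_ofNat Polynomial.C 2]
      constructor
      · refine le_trans (natDegree_sub_le _ _) (max_le ?_ (by omega))
        rw [h2]
        refine le_trans (natDegree_C_mul_le _ _) (le_trans (natDegree_mul_le) ?_)
        simp; omega
      · intro k hk
        rw [coeff_sub, h2, coeff_C_mul, p0 k (by omega)]
        match k with
        | 0 => simp [Polynomial.mul_coeff_zero]
        | (k'+1) => rw [coeff_X_mul, p1 k' (by omega)]; ring

private lemma evalT19 (m : ℕ) (x : ℝ) :
    (T ℝ (2*(m:ℤ))).eval x = ∑ k ∈ range (m+1), (T ℝ (2*(m:ℤ))).coeff (2*k) * x^(2*k) := by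
  obtain ⟨hd, hp⟩ := chebAux19 (2*m)
  rw [show ((2*m:ℕ):ℤ) = 2*(m:ℤ) by push_cast; ring] at hd hp
  rw [eval_eq_sum_range' (n := 2*m+1) (lt_of_le_of_lt hd (by omega)) x]
  have himg : ∑ i ∈ (range (m+1)).image (fun k => 2*k), (T ℝ (2*(m:ℤ))).coeff i * x^i
      = ∑ k ∈ range (m+1), (T ℝ (2*(m:ℤ))).coeff (2*k) * x^(2*k) :=
    Finset.sum_image (fun a _ b _ h => by omega)
  rw [← himg]
  refine (Finset.sum_subset ?_ ?_).symm
  · intro i hi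
    simp only [Finset.mem_image, Finset.mem_range] at *
    obtain ⟨k, hk, rfl⟩ := hi; omega
  · intro i hi hni
    simp only [Finset.mem_image, Finset.mem_range] at *
    have : i % 2 ≠ (2*m) % 2 := by
      rcases Nat.even_or_odd i with ⟨r, rfl⟩ | ⟨r, rfl⟩
      · exact absurd ⟨r, by omega, by omega⟩ hni
      · omega
    rw [hp i this, zero_mul]

private lemma cCoeff19 (m k : ℕ) :
    (Polynomial.derivative^[2*k] (T ℝ (2*(m:ℤ)))).eval 0 / ((2*k).factorial : ℝ)
      = (T ℝ (2*(m:ℤ))).coeff (2*k) := by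
  rw [← Polynomial.coeff_zero_eq_eval_zero, Polynomial.coeff_iterate_derivative]
  simp only [Nat.zero_add, Nat.descFactorial_self, nsmul_eq_mul]
  rw [mul_comm, mul_div_assoc, div_self (by exact_mod_cast (Nat.factorial_ne_zero (2*k))), mul_one]

private lemma cMain19 (w : ℂ) (hw : w ≠ 0) (n : ℕ) :
    ((w^n).re : ℝ) = ‖w‖ ^ n * (T ℝ n).eval (w.re / ‖w‖) := by
  conv_lhs => rw [← Complex.norm_mul_exp_arg_mul_I w]
  rw [mul_pow, ← Complex.ofReal_pow, ← Complex.exp_nat_mul]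
  have h : (n : ℂ) * (↑(Complex.arg w) * Complex.I) = ↑((n : ℝ) * Complex.arg w) * Complex.I := by
    push_cast; ring
  rw [h, Complex.re_ofReal_mul, Complex.exp_ofReal_mul_I_re, ← Complex.cos_arg hw]
  rw [Polynomial.Chebyshev.T_real_cos]
  push_cast
  ring

private lemma hnorm19 (z : Fin 2 → ℤ) :
    ‖lpt (1 : Matrix (Fin 2) (Fin 2) ℝ) z‖
      = ‖(((z 0 : ℤ) : ℂ) + Complex.I * ((z 1 : ℤ) : ℂ))‖ := by
  unfold lpt
  rw [Matrix.one_mulVec, EuclideanSpace.norm_eq]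
  simp [Fin.sum_univ_two, sq_abs, Complex.norm_def, Complex.normSq_apply]
  ring_nf

private lemma hrval19 (z : Fin 2 → ℤ) :
    ‖lpt (1 : Matrix (Fin 2) (Fin 2) ℝ) z‖
      = Real.sqrt (((z 0 : ℤ) : ℝ)^2 + ((z 1 : ℤ) : ℝ)^2) := by
  unfold lpt
  rw [Matrix.one_mulVec, EuclideanSpace.norm_eq]
  simp [Fin.sum_univ_two, sq_abs]

private lemma abs_le_sqrt19 (x y : ℝ) : |x| ≤ Real.sqrt (x^2+y^2) := by
  calc |x| = Real.sqrt (x^2) := (Real.sqrt_sq_eq_abs x).symm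
    _ ≤ _ := Real.sqrt_le_sqrt (by nlinarith [sq_nonneg y])

private lemma hrpos19 (z : Fin 2 → ℤ) (hz : z ≠ 0) :
    0 < ‖lpt (1 : Matrix (Fin 2) (Fin 2) ℝ) z‖ := by
  rw [hrval19]
  apply Real.sqrt_pos.mpr
  rcases Function.ne_iff.mp hz with ⟨i, hi⟩
  have hi' : ((z i : ℤ) : ℝ) ≠ 0 := by exact_mod_cast hi
  have h01 : ((z 0 : ℤ):ℝ) ≠ 0 ∨ ((z 1 : ℤ):ℝ) ≠ 0 := by
    rcases i with ⟨iv, hlt⟩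
    interval_cases iv
    · exact Or.inl hi'
    · exact Or.inr hi'
  rcases h01 with h | h
  · nlinarith [sq_nonneg ((z 1 : ℤ):ℝ), pow_pos (abs_pos.mpr h) 2, sq_abs ((z 0 : ℤ):ℝ)]
  · nlinarith [sq_nonneg ((z 0 : ℤ):ℝ), pow_pos (abs_pos.mpr h) 2, sq_abs ((z 1 : ℤ):ℝ)]

private lemma hcoord19 (z : Fin 2 → ℤ) (i : Fin 2) :
    |((z i : ℤ) : ℝ)| ≤ ‖lpt (1 : Matrix (Fin 2) (Fin 2) ℝ) z‖ := by
  rw [hrval19]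
  match i with
  | 0 => exact abs_le_sqrt19 _ _
  | 1 => rw [add_comm]; exact abs_le_sqrt19 _ _

private lemma hler19 (z : Fin 2 → ℤ) (hz : z ≠ 0) :
    ‖z‖ ≤ ‖lpt (1 : Matrix (Fin 2) (Fin 2) ℝ) z‖ := by
  refine (pi_norm_le_iff_of_nonneg (hrpos19 z hz).le).mpr fun i => ?_
  rw [Int.norm_eq_abs]
  exact_mod_cast hcoord19 z i

private lemma normBound19 (ν : ℂ) (hν : 2 < ν.re) (z : Fin 2 → ℤ) (hz : z ≠ 0) (q : ℕ) (t : ℝ)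
    (ht : |t| ≤ ‖lpt (1 : Matrix (Fin 2) (Fin 2) ℝ) z‖ ^ (2*q)) :
    ‖(t : ℂ) * (‖lpt (1 : Matrix (Fin 2) (Fin 2) ℝ) z‖ : ℂ) ^ (-(ν + 2*(q:ℂ)))‖
      ≤ ‖z‖ ^ (-ν.re) := by
  set r := ‖lpt (1 : Matrix (Fin 2) (Fin 2) ℝ) z‖ with hr
  have hzpos : 0 < ‖z‖ := norm_pos_iff.mpr hz
  have hlr : ‖z‖ ≤ r := hler19 z hz
  have hrp : 0 < r := hrpos19 z hz
  rw [norm_mul, Complex.norm_real,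
    Complex.norm_cpow_eq_rpow_re_of_pos hrp]
  have hre : (-(ν + 2*(q:ℂ))).re = -ν.re - (2*q:ℕ) := by simp; push_cast; ring
  rw [hre]
  calc ‖t‖ * r ^ (-ν.re - (2*q:ℕ))
      ≤ r ^ (2*q) * r ^ (-ν.re - (2*q:ℕ)) := by
        exact mul_le_mul_of_nonneg_right (by rwa [Real.norm_eq_abs])
          (Real.rpow_nonneg hrp.le _)
    _ = r ^ (-ν.re) := by
        rw [← Real.rpow_natCast r (2*q), ← Real.rpow_add hrp]; congr 1; ring
    _ ≤ ‖z‖ ^ (-ν.re) := Real.rpow_le_rpow_of_nonpos hzpos hlr (by linarith)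

private lemma termwise19 (m : ℕ) (ν : ℂ) (z : Fin 2 → ℤ) (hz : z ≠ 0) :
    ((((((z 0 : ℤ) : ℂ) + Complex.I * ((z 1 : ℤ) : ℂ)) ^ (2*m)).re : ℝ) : ℂ)
        * (‖lpt (1 : Matrix (Fin 2) (Fin 2) ℝ) z‖ : ℂ) ^ (-(ν + 2*m))
      = ∑ k ∈ Finset.range (m+1),
          (((T ℝ (2*(m:ℤ))).coeff (2*k) : ℝ) : ℂ) *
            (((((z 0 : ℤ) : ℝ) ^ (2*k) : ℝ) : ℂ)
              * (‖lpt (1 : Matrix (Fin 2) (Fin 2) ℝ) z‖ : ℂ) ^ (-(ν + 2*k))) := by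
  set w := ((z 0 : ℤ) : ℂ) + Complex.I * ((z 1 : ℤ) : ℂ) with hw
  set a := ((z 0 : ℤ) : ℝ) with ha
  have hrw : ‖lpt (1 : Matrix (Fin 2) (Fin 2) ℝ) z‖ = ‖w‖ := hnorm19 z
  set r := ‖w‖ with hrdef
  have hrp : 0 < r := hrw ▸ hrpos19 z hz
  have hwne : w ≠ 0 := norm_pos_iff.mp hrp
  have hare : w.re = a := by simp [hw, ha]
  have h1 : ((w^(2*m)).re : ℝ)
      = ∑ k ∈ Finset.range (m+1), (T ℝ (2*(m:ℤ))).coeff (2*k) * a^(2*k) * r^(2*(m-k)) := by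
    rw [cMain19 w hwne (2*m),
      show ((2*m : ℕ):ℤ) = 2*(m:ℤ) by push_cast; ring, hare, evalT19, Finset.mul_sum]
    refine Finset.sum_congr rfl fun k hk => ?_
    have hk' : k ≤ m := Nat.lt_succ_iff.mp (Finset.mem_range.mp hk)
    have hpow : r^(2*m) = r^(2*(m-k)) * r^(2*k) := by rw [← pow_add]; congr 1; omega
    rw [div_pow, hpow]
    field_simp
    ring
  rw [hrw, h1]
  push_cast
  rw [Finset.sum_mul]
  refine Finset.sum_congr rfl fun k hk => ?_
  have hk' : k ≤ m := Nat.lt_succ_iff.mp (Finset.mem_range.mp hk)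
  have hcexp : (-(ν + 2*(k:ℂ))) = ((2*(m-k) : ℕ) : ℂ) + (-(ν + 2*(m:ℂ))) := by
    push_cast [Nat.cast_sub hk']; ring
  rw [hcexp, Complex.cpow_add _ _ (by exact_mod_cast hrp.ne' : (r:ℂ) ≠ 0),
    Complex.cpow_natCast]
  push_cast
  ring

end Statement19Aux

/-- Solid-harmonic/Chebyshev identity for two-dimensional lattice sums:
`Σ'_{z∈ℤ²} A_{2m}(z)/|z|^{ν+2m} = Σ_{k=0}^{m} (T_{2m}^{(2k)}(0)/(2k)!) Σ'_{z∈ℤ²} z₁^{2k}/|z|^{ν+2k}`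
for `Re ν > 2`, with all series converging absolutely. -/
theorem statement19 (m : ℕ) (hm : 1 ≤ m) (ν : ℂ) (hν : 2 < ν.re) :
    (Summable fun z : {z : Fin 2 → ℤ // z ≠ 0} =>
      ‖((((((z.1 0 : ℤ) : ℂ) + Complex.I * ((z.1 1 : ℤ) : ℂ)) ^ (2*m)).re : ℝ) : ℂ)
        * (‖lpt (1 : Matrix (Fin 2) (Fin 2) ℝ) z.1‖ : ℂ) ^ (-(ν + 2*m))‖) ∧
    (∀ k : ℕ, k ≤ m →
      Summable fun z : {z : Fin 2 → ℤ // z ≠ 0} =>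
        ‖((((z.1 0 : ℤ) : ℝ) ^ (2*k) : ℝ) : ℂ)
          * (‖lpt (1 : Matrix (Fin 2) (Fin 2) ℝ) z.1‖ : ℂ) ^ (-(ν + 2*k))‖) ∧
    (∑' z : {z : Fin 2 → ℤ // z ≠ 0},
        ((((((z.1 0 : ℤ) : ℂ) + Complex.I * ((z.1 1 : ℤ) : ℂ)) ^ (2*m)).re : ℝ) : ℂ)
          * (‖lpt (1 : Matrix (Fin 2) (Fin 2) ℝ) z.1‖ : ℂ) ^ (-(ν + 2*m)))
      = ∑ k ∈ Finset.range (m + 1),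
          ((((Polynomial.derivative^[2*k] (Polynomial.Chebyshev.T ℝ (2*m))).eval 0
              / ((2*k).factorial : ℝ) : ℝ)) : ℂ)
            * ∑' z : {z : Fin 2 → ℤ // z ≠ 0},
                ((((z.1 0 : ℤ) : ℝ) ^ (2*k) : ℝ) : ℂ)
                  * (‖lpt (1 : Matrix (Fin 2) (Fin 2) ℝ) z.1‖ : ℂ) ^ (-(ν + 2*k)) := by
  have hsum : Summable fun z : {z : Fin 2 → ℤ // z ≠ 0} => ‖z.1‖ ^ (-ν.re) :=
    (EisensteinSeries.summable_one_div_norm_rpow hν).subtype _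
  have hbound1 : ∀ z : {z : Fin 2 → ℤ // z ≠ 0},
      ‖((((((z.1 0 : ℤ) : ℂ) + Complex.I * ((z.1 1 : ℤ) : ℂ)) ^ (2*m)).re : ℝ) : ℂ)
        * (‖lpt (1 : Matrix (Fin 2) (Fin 2) ℝ) z.1‖ : ℂ) ^ (-(ν + 2*m))‖
        ≤ ‖z.1‖ ^ (-ν.re) := by
    intro z
    refine normBound19 ν hν z.1 z.2 m _ ?_
    have h := Complex.abs_re_le_norm ((((z.1 0 : ℤ) : ℂ) + Complex.I * ((z.1 1 : ℤ) : ℂ)) ^ (2*m))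
    rw [norm_pow, ← hnorm19] at h
    exact h
  have hbound2 : ∀ k : ℕ, k ≤ m → ∀ z : {z : Fin 2 → ℤ // z ≠ 0},
      ‖((((z.1 0 : ℤ) : ℝ) ^ (2*k) : ℝ) : ℂ)
        * (‖lpt (1 : Matrix (Fin 2) (Fin 2) ℝ) z.1‖ : ℂ) ^ (-(ν + 2*k))‖
        ≤ ‖z.1‖ ^ (-ν.re) := by
    intro k hk z
    refine normBound19 ν hν z.1 z.2 k _ ?_
    rw [abs_pow]
    exact pow_le_pow_left₀ (abs_nonneg _) (hcoord19 z.1 0) _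
  have hS2 : ∀ k : ℕ, k ≤ m →
      Summable fun z : {z : Fin 2 → ℤ // z ≠ 0} =>
        ‖((((z.1 0 : ℤ) : ℝ) ^ (2*k) : ℝ) : ℂ)
          * (‖lpt (1 : Matrix (Fin 2) (Fin 2) ℝ) z.1‖ : ℂ) ^ (-(ν + 2*k))‖ := by
    intro k hk
    exact Summable.of_nonneg_of_le (fun z => norm_nonneg _) (hbound2 k hk) hsum
  refine ⟨Summable.of_nonneg_of_le (fun z => norm_nonneg _) hbound1 hsum, hS2, ?_⟩
  rw [tsum_congr (fun z : {z : Fin 2 → ℤ // z ≠ 0} => termwise19 m ν z.1 z.2)]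
  rw [Summable.tsum_finsetSum (fun k hk =>
    (((hS2 k (Nat.lt_succ_iff.mp (Finset.mem_range.mp hk))).of_norm).mul_left _))]
  refine Finset.sum_congr rfl fun k hk => ?_
  rw [tsum_mul_left]
  congr 1
  rw [← cCoeff19 m k]
end
end
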